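/- Let X be a Segal simplicial space (i.e., the canonical maps Xₙ → X₁ ×_{X₀} ⋯ ×_{X₀} X₁ are equivalences, equivalently the counit ε : Dec_⊤(X) → X is a right fibration and ε : Dec_⊥(X) → X is a left fibration). Then any Dec_⊥-coalgebra structure γ : X → Dec_⊥(X) on X is rigid, i.e., γ is a cartesian simplicial map. -/

import Mathlib

open CategoryTheory Simplicial Opposite

/-- A `Dec_⊥`-coalgebra structure on a simplicial object `X` (simplicial map
`γ : X ⟶ Dec_⊥(X)` with counit and coassociativity laws). -/
structure DecBotCoalg {C : Type*} [Category C] (X : SimplicialObject C) where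
  γ : ∀ n : ℕ, X _⦋n⦌ ⟶ X _⦋n+1⦌
  nat_δ : ∀ (n : ℕ) (i : Fin (n + 2)), X.δ i ≫ γ n = γ (n+1) ≫ X.δ i.succ
  nat_σ : ∀ (n : ℕ) (i : Fin (n + 1)), X.σ i ≫ γ (n+1) = γ n ≫ X.σ i.succ
  counit : ∀ n : ℕ, γ n ≫ X.δ (0 : Fin (n + 2)) = 𝟙 _
  coassoc : ∀ n : ℕ, γ n ≫ γ (n+1) = γ n ≫ X.σ (0 : Fin (n + 2))

section Retract

variable {C : Type*} [Category C] [Limits.HasPullbacks C]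

open Limits

/-- A retract (in the category of commutative squares) of a pullback square is a
pullback square. -/
lemma isPullback_of_retract
    {P₀ X₀ Y₀ Z₀ P₁ X₁ Y₁ Z₁ : C}
    {fst₀ : P₀ ⟶ X₀} {snd₀ : P₀ ⟶ Y₀} {f₀ : X₀ ⟶ Z₀} {g₀ : Y₀ ⟶ Z₀}
    {fst₁ : P₁ ⟶ X₁} {snd₁ : P₁ ⟶ Y₁} {f₁ : X₁ ⟶ Z₁} {g₁ : Y₁ ⟶ Z₁}
    (w : fst₀ ≫ f₀ = snd₀ ≫ g₀)
    {iP : P₀ ⟶ P₁} {iX : X₀ ⟶ X₁} {iY : Y₀ ⟶ Y₁} {iZ : Z₀ ⟶ Z₁}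
    {rP : P₁ ⟶ P₀} {rX : X₁ ⟶ X₀} {rY : Y₁ ⟶ Y₀}
    (hiP : iP ≫ rP = 𝟙 _) (hiX : iX ≫ rX = 𝟙 _) (hiY : iY ≫ rY = 𝟙 _)
    (c1 : iP ≫ fst₁ = fst₀ ≫ iX) (c2 : iP ≫ snd₁ = snd₀ ≫ iY)
    (c3 : iX ≫ f₁ = f₀ ≫ iZ) (c4 : iY ≫ g₁ = g₀ ≫ iZ)
    (c5 : rP ≫ fst₀ = fst₁ ≫ rX) (c6 : rP ≫ snd₀ = snd₁ ≫ rY)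
    (h : IsPullback fst₁ snd₁ f₁ g₁) : IsPullback fst₀ snd₀ f₀ g₀ := by
  -- comparison map to the chosen pullback
  set c : P₀ ⟶ pullback f₀ g₀ := pullback.lift fst₀ snd₀ w with hc
  have hL : (pullback.fst f₀ g₀ ≫ iX) ≫ f₁ = (pullback.snd f₀ g₀ ≫ iY) ≫ g₁ := by
    rw [Category.assoc, Category.assoc, c3, c4, ← Category.assoc, ← Category.assoc,
      pullback.condition]
  set L : pullback f₀ g₀ ⟶ P₁ := h.lift _ _ hL with hLdef
  set d : pullback f₀ g₀ ⟶ P₀ := L ≫ rP with hd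
  have hcL : c ≫ L = iP := by
    apply h.hom_ext
    · rw [Category.assoc, hLdef, h.lift_fst, ← Category.assoc, hc, pullback.lift_fst, c1]
    · rw [Category.assoc, hLdef, h.lift_snd, ← Category.assoc, hc, pullback.lift_snd, c2]
  have hcd : c ≫ d = 𝟙 _ := by
    rw [hd, ← Category.assoc, hcL, hiP]
  have hdc : d ≫ c = 𝟙 _ := by
    apply pullback.hom_ext
    · rw [Category.assoc, hc, pullback.lift_fst, Category.id_comp, hd, Category.assoc, c5,
        ← Category.assoc, hLdef, h.lift_fst, Category.assoc, hiX, Category.comp_id]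
    · rw [Category.assoc, hc, pullback.lift_snd, Category.id_comp, hd, Category.assoc, c6,
        ← Category.assoc, hLdef, h.lift_snd, Category.assoc, hiY, Category.comp_id]
  exact IsPullback.of_iso_pullback ⟨w⟩ ⟨c, d, hcd, hdc⟩ (pullback.lift_fst _ _ _)
    (pullback.lift_snd _ _ _)

end Retract

section Segal

variable {C : Type*} [Category C] [Limits.HasPullbacks C] (X : SimplicialObject C)

omit [Limits.HasPullbacks C] in
/-- For a Segal object, all the squares expressing that the counit
`ε : Dec_⊥(X) → X` is a left fibration (i.e. the squares of `δ 0` against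
`δ j` for `j ≥ 1`) are pullbacks. -/
lemma segal_E
    (hSegal : ∀ n : ℕ, IsPullback (X.δ (0 : Fin (n + 3))) (X.δ (Fin.last (n + 2)))
      (X.δ (Fin.last (n + 1))) (X.δ (0 : Fin (n + 2)))) :
    ∀ (n : ℕ) (k : Fin (n + 1)),
      IsPullback (X.δ k.succ.succ) (X.δ (0 : Fin (n + 3))) (X.δ (0 : Fin (n + 2)))
        (X.δ k.succ) := by
  intro n
  induction n with
  | zero =>
    intro k
    fin_cases k
    have h := (hSegal 0).flip
    have e1 : (Fin.last 1) = ((0 : Fin 1).succ : Fin 2) := by decide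
    have e2 : (Fin.last 2) = ((0 : Fin 1).succ.succ : Fin 3) := by decide
    rw [e1, e2] at h
    exact h
  | succ n ihn =>
    intro k
    induction k using Fin.reverseInduction with
    | last =>
      have h := (hSegal (n+1)).flip
      rw [show (Fin.last (n+2)) = (Fin.last (n+1)).succ from (Fin.succ_last (n+1)).symm,
        show (Fin.last (n+3)) = (Fin.last (n+1)).succ.succ by
          rw [Fin.succ_last, Fin.succ_last]] at h
      exact h
    | cast m ih =>
      -- target: IsPullback (X.δ m.castSucc.succ.succ) (X.δ 0) (X.δ 0) (X.δ m.castSucc.succ)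
      have big : IsPullback (X.δ m.castSucc.succ.succ ≫ X.δ m.succ.succ)
          (X.δ (0 : Fin (n + 4))) (X.δ (0 : Fin (n + 2)))
          (X.δ m.castSucc.succ ≫ X.δ m.succ) := by
        have e1 : X.δ m.castSucc.succ.succ ≫ X.δ m.succ.succ =
            X.δ m.succ.succ.succ ≫ X.δ m.succ.succ := by
          rw [X.δ_comp_δ (le_refl m.succ.succ), Fin.succ_castSucc, Fin.succ_castSucc]
        have e2 : X.δ m.castSucc.succ ≫ X.δ m.succ =
            X.δ m.succ.succ ≫ X.δ m.succ := by
          rw [X.δ_comp_δ (le_refl m.succ), Fin.succ_castSucc]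
        rw [e1, e2]
        exact (ih).paste_horiz (ihn m)
      refine IsPullback.of_right big ?_ (ihn m)
      have := X.δ_comp_δ (i := (0 : Fin (n+3))) (j := m.castSucc.succ) (Fin.zero_le _)
      rw [Fin.castSucc_zero] at this
      exact this

end Segal

/-- If `X` is a Segal simplicial object (Segal condition expressed by the
pullback squares `X_{n+2} ≅ X_{n+1} ×_{X_n} X_{n+1}` along bottom and top faces, equivalently
the counit `ε : Dec_⊤(X) → X` is a right fibration), then every `Dec_⊥`-coalgebra structure
`γ` on `X` is rigid: `γ` is a cartesian simplicial map, i.e. all of its naturality squares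
(at faces and at degeneracies) are pullbacks. -/
theorem decBotCoalg_rigid_of_segal {C : Type*} [Category C]
    [Limits.HasPullbacks C] (X : SimplicialObject C)
    (hSegal : ∀ n : ℕ, IsPullback (X.δ (0 : Fin (n + 3))) (X.δ (Fin.last (n + 2)))
      (X.δ (Fin.last (n + 1))) (X.δ (0 : Fin (n + 2))))
    (γ : DecBotCoalg X) :
    (∀ (n : ℕ) (i : Fin (n + 2)),
        IsPullback (X.δ i) (γ.γ (n+1)) (γ.γ n) (X.δ i.succ)) ∧
    (∀ (n : ℕ) (i : Fin (n + 1)),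
        IsPullback (X.σ i) (γ.γ n) (γ.γ (n+1)) (X.σ i.succ)) := by
  have E := segal_E X hSegal
  -- Step 1: the face squares of γ at indices ≥ 1, via the left-fibration squares.
  have Fpos : ∀ (n : ℕ) (j : Fin (n + 1)),
      IsPullback (X.δ j.succ) (γ.γ (n+1)) (γ.γ n) (X.δ j.succ.succ) := by
    intro n j
    refine IsPullback.of_bot ?_ (γ.nat_δ n j.succ) (E n j)
    rw [γ.counit, γ.counit]
    exact IsPullback.of_vert_isIso ⟨by simp⟩
  -- Step 2: the face square of γ at index 0, as a retract of the face square at index 1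
  -- one level up (using the splittings given by γ and σ 0).
  have F : ∀ (n : ℕ) (i : Fin (n + 2)),
      IsPullback (X.δ i) (γ.γ (n+1)) (γ.γ n) (X.δ i.succ) := by
    intro n i
    rcases Fin.eq_zero_or_eq_succ i with rfl | ⟨j, rfl⟩
    · -- retract argument
      refine isPullback_of_retract (γ.nat_δ n 0)
        (iP := γ.γ (n+1)) (iX := γ.γ n) (iY := X.σ (0 : Fin (n+3)))
        (iZ := X.σ (0 : Fin (n+2)))
        (rP := X.δ (0 : Fin (n+3))) (rX := X.δ (0 : Fin (n+2)))
        (rY := X.δ ((0 : Fin (n+3)).succ))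
        (γ.counit (n+1)) (γ.counit n) X.δ_comp_σ_succ
        (γ.nat_δ n 0).symm (γ.coassoc (n+1)) (γ.coassoc n) ?c4 ?c5
        (γ.nat_δ (n+1) 0) (Fpos (n+1) 0)
      case c4 =>
        have h := X.δ_comp_σ_of_gt (i := (0 : Fin (n+2)).succ) (j := (0 : Fin (n+2)))
          (by simp [Fin.castSucc_lt_succ_iff])
        rwa [Fin.castSucc_zero] at h
      case c5 =>
        have h := X.δ_comp_δ (i := (0 : Fin (n+2))) (j := (0 : Fin (n+2))) (le_refl _)
        rw [Fin.castSucc_zero] at h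
        exact h.symm
    · exact Fpos n j
  -- Step 3: the degeneracy squares, by cancellation against the face squares.
  refine ⟨F, ?_⟩
  intro n i
  have big : IsPullback (X.σ i ≫ X.δ i.castSucc) (γ.γ n) (γ.γ n)
      (X.σ i.succ ≫ X.δ i.castSucc.succ) := by
    rw [X.δ_comp_σ_self, Fin.succ_castSucc, X.δ_comp_σ_self]
    exact IsPullback.of_horiz_isIso ⟨by simp⟩
  exact IsPullback.of_right big (γ.nat_σ n i) (F n i.castSucc)
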